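/- arXiv:1411.6458 — 6 statements merged into one kernel-verified Lean document; each statement's English description precedes it below -/
import Mathlib

section
/- Let H be a nonzero real polynomial of degree d satisfying H(z) = (-1)^n H(-k₀ - z) for all z, where k₀ ≥ 1 is an integer. If at least d - 3 roots of H (counted with multiplicity, in ℂ) lie on the set C = {z ∈ ℂ : Im z = 0 or Re z = -k₀/2}, then all roots of H lie on C. -/
open Polynomial

open Classical in
theorem stmt1 (H : Polynomial ℝ) (hH : H ≠ 0) (hd : 0 < H.natDegree) (n : ℕ) (k₀ : ℤ)
    (hk : 1 ≤ k₀)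
    (hsym : ∀ z : ℝ, H.eval z = (-1) ^ n * H.eval (-(k₀ : ℝ) - z))
    (hroots : H.natDegree - 3 ≤
      Multiset.card (((H.map (algebraMap ℝ ℂ)).roots).filter
        (fun z => z.im = 0 ∨ z.re = -(k₀ : ℝ) / 2))) :
    ∀ z ∈ (H.map (algebraMap ℝ ℂ)).roots, z.im = 0 ∨ z.re = -(k₀ : ℝ) / 2 := by
  set P := H.map (algebraMap ℝ ℂ) with hP
  have hP0 : P ≠ 0 := by
    simpa [hP, Polynomial.map_eq_zero] using hH
  -- polynomial identity from hsym
  have hpoly : H = Polynomial.C ((-1 : ℝ) ^ n) * (H.comp (Polynomial.C (-(k₀ : ℝ)) - Polynomial.X)) := by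
    apply Polynomial.funext
    intro z
    simp [hsym z, mul_comm]
  have hpolyC : P = Polynomial.C ((-1 : ℂ) ^ n) * (P.comp (Polynomial.C (-(k₀ : ℂ)) - Polynomial.X)) := by
    rw [hP]
    conv_lhs => rw [hpoly]
    simp [Polynomial.map_comp]
  -- symmetry over ℂ
  have hsymC : ∀ z : ℂ, P.eval (-(k₀ : ℝ) - z) = (-1) ^ n * P.eval z := by
    intro z
    conv_lhs => rw [hpolyC]
    rw [Polynomial.eval_mul, Polynomial.eval_C, Polynomial.eval_comp]
    push_cast
    simp only [Polynomial.eval_sub, Polynomial.eval_C, Polynomial.eval_X]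
    rw [show -(k₀:ℂ) - (-(k₀:ℂ) - z) = z by ring]
  -- conjugation symmetry
  have hconj : ∀ z : ℂ, P.eval ((starRingEnd ℂ) z) = (starRingEnd ℂ) (P.eval z) := by
    intro z
    have := Polynomial.aeval_conj (K := ℂ) H z
    simpa [Polynomial.aeval_def, Polynomial.eval_map, hP] using this
  have hmem : ∀ z : ℂ, z ∈ P.roots ↔ P.eval z = 0 := by
    intro z
    simp [Polynomial.mem_roots, hP0, Polynomial.IsRoot]
  -- counting
  have hcard : Multiset.card P.roots = H.natDegree := by
    rw [← Polynomial.natDegree_map (algebraMap ℝ ℂ)]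
    exact (Polynomial.splits_iff_card_roots.mp (IsAlgClosed.splits _))
  by_contra hcon
  push_neg at hcon
  obtain ⟨z, hz, hzim, hzre⟩ := hcon
  have hz0 : P.eval z = 0 := (hmem z).mp hz
  -- the four roots
  set c : ℂ → ℂ := fun w => (starRingEnd ℂ) w
  set w : ℂ := -(k₀ : ℝ) - z with hw
  have hz0' : P.eval (c z) = 0 := by rw [hconj]; simp [hz0]
  have hw0 : P.eval w = 0 := by rw [hw, hsymC]; simp [hz0]
  have hw0' : P.eval (c w) = 0 := by rw [hconj]; simp [hw0]
  have him : z.im ≠ 0 := hzim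
  have hre : z.re ≠ -(k₀ : ℝ) / 2 := hzre
  have hwre : w.re = -(k₀ : ℝ) - z.re := by simp [hw]
  have hwim : w.im = -z.im := by simp [hw]
  have hwre' : w.re ≠ z.re := by
    rw [hwre]; intro h
    apply hre; linarith
  -- off-cross predicate
  set Q : ℂ → Prop := fun u => ¬(u.im = 0 ∨ u.re = -(k₀ : ℝ) / 2)
  have hQz : Q z := by simp [Q]; exact ⟨hzim, hzre⟩
  have hQcz : Q (c z) := by
    simp [Q, c]; exact ⟨hzim, hzre⟩
  have hQw : Q w := by
    simp [Q, hwre, hwim]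
    refine ⟨hzim, fun h => hre ?_⟩
    linarith
  have hQcw : Q (c w) := by
    simp [Q, c, hwre, hwim]
    refine ⟨hzim, fun h => hre ?_⟩
    linarith
  -- the four are pairwise distinct
  have h12 : z ≠ c z := by
    intro h; apply him
    have := congrArg Complex.im h
    simp [c] at this; linarith
  have h13 : z ≠ w := by
    intro h; exact hwre' (congrArg Complex.re h).symm
  have h14 : z ≠ c w := by
    intro h
    have := congrArg Complex.re h
    simp [c, hwre] at this
    exact hwre' (by simp [hwre]; linarith)
  have h23 : c z ≠ w := by
    intro h
    have := congrArg Complex.re h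
    simp [c, hwre] at this
    apply hwre'; rw [hwre]; linarith
  have h24 : c z ≠ c w := by
    intro h
    exact h13 (by simpa [c] using congrArg c h)
  have h34 : w ≠ c w := by
    intro h; apply him
    have := congrArg Complex.im h
    simp [c, hwim] at this; linarith
  -- the off-cross multiset
  set Soff := P.roots.filter Q with hSoff
  have hsub : ({z, c z, w, c w} : Finset ℂ) ⊆ Soff.toFinset := by
    intro u hu
    simp only [Finset.mem_insert, Finset.mem_singleton] at hu
    rw [Multiset.mem_toFinset, hSoff, Multiset.mem_filter]
    rcases hu with rfl | rfl | rfl | rfl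
    · exact ⟨(hmem _).mpr hz0, hQz⟩
    · exact ⟨(hmem _).mpr hz0', hQcz⟩
    · exact ⟨(hmem _).mpr hw0, hQw⟩
    · exact ⟨(hmem _).mpr hw0', hQcw⟩
  have hc4 : ({z, c z, w, c w} : Finset ℂ).card = 4 := by
    rw [Finset.card_insert_of_notMem (by simp [h12, h13, h14]),
      Finset.card_insert_of_notMem (by simp [h23, h24]),
      Finset.card_insert_of_notMem (by simp [h34]),
      Finset.card_singleton]
  have h4le : 4 ≤ Multiset.card Soff := by
    calc 4 = ({z, c z, w, c w} : Finset ℂ).card := hc4.symm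
    _ ≤ Soff.toFinset.card := Finset.card_le_card hsub
    _ ≤ Multiset.card Soff := Multiset.toFinset_card_le _
  -- split the roots
  have hsplit : Multiset.card (P.roots.filter (fun u => u.im = 0 ∨ u.re = -(k₀ : ℝ) / 2))
      + Multiset.card Soff = H.natDegree := by
    rw [hSoff, ← hcard]
    have := Multiset.filter_add_not (fun u => u.im = 0 ∨ u.re = -(k₀ : ℝ) / 2) P.roots
    conv_rhs => rw [← this]
    simp [Q]
  omega
end

section
/- Let H be a nonzero real polynomial satisfying H(z) = (-1)^n H(-k₀-z) for all z, H(-j) = 0 for j = 1, …, k₀-1, where k₀ ≥ 1, and suppose n ≡ k₀ ≡ 0 (mod 2). Then -k₀/2 is a root of H of multiplicity at least 2. -/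
open Polynomial

theorem stmt3 (H : Polynomial ℝ) (hH : H ≠ 0) (n : ℕ) (k₀ : ℤ) (hk : 1 ≤ k₀)
    (hn : Even n) (hk₀ : Even k₀)
    (hsym : ∀ z : ℝ, H.eval z = (-1) ^ n * H.eval (-(k₀ : ℝ) - z))
    (hzero : ∀ j : ℤ, 1 ≤ j → j ≤ k₀ - 1 → H.eval (-(j : ℝ)) = 0) :
    2 ≤ H.rootMultiplicity (-(k₀ : ℝ) / 2) := by
  have hne : (-1 : ℝ) ^ n = 1 := hn.neg_one_pow
  obtain ⟨m, hm⟩ := hk₀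
  have hm1 : 1 ≤ m := by omega
  set a : ℝ := -(k₀ : ℝ) / 2 with ha
  -- root
  have hroot : H.IsRoot a := by
    have := hzero m hm1 (by omega)
    have : H.eval (-(m : ℝ)) = 0 := this
    have haeq : a = -(m : ℝ) := by
      rw [ha, hm]; push_cast; ring
    rw [IsRoot, haeq]; exact this
  -- polynomial symmetry
  have hpoly : H = H.comp (C (-(k₀ : ℝ)) - X) := by
    apply Polynomial.funext
    intro z
    rw [eval_comp]
    simpa [hne] using hsym z
  have hderiv : H.derivative.IsRoot a := by
    have hd : H.derivative = -(H.derivative.comp (C (-(k₀ : ℝ)) - X)) := by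
      conv_lhs => rw [hpoly]
      rw [derivative_comp]
      simp [mul_comm]
    have hfix : -(k₀ : ℝ) - a = a := by rw [ha]; ring
    have := congrArg (fun p => Polynomial.eval a p) hd
    simp only [eval_neg, eval_comp, eval_sub, eval_C, eval_X] at this
    rw [hfix] at this
    have : H.derivative.eval a = 0 := by linarith
    exact this
  have := (one_lt_rootMultiplicity_iff_isRoot hH).2 ⟨hroot, hderiv⟩
  omega
end

section
/- (Popoviciu symmetry, one direction) Let H be a real polynomial of degree m and let P(t) = Σ_{k≥0} H(k) t^k be the generating function of its values at natural numbers, viewed as a rational function P(t) = U(t)/(1-t)^{m+1}. If k₀ ≥ 1, H(-1) = H(-2) = ⋯ = H(-k₀+1) = 0, and H(k) = (-1)^m H(-k₀-k) for all integers k, then P(t⁻¹) = (-1)^{m+1} t^{k₀} P(t) as rational functions. -/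
open Polynomial Finset

-- forward difference of polynomial eval
lemma auxFwdEval (P : ℝ[X]) :
    fwdDiff (1:ℝ) (fun x => P.eval x) = fun x => ((Polynomial.taylor 1 P) - P).eval x := by
  funext x
  simp [fwdDiff, Polynomial.taylor_apply, Polynomial.eval_comp]

lemma auxDegDrop (P : ℝ[X]) (h : P.natDegree ≠ 0) :
    ((Polynomial.taylor 1 P) - P).natDegree < P.natDegree := by
  have h0 : P ≠ 0 := fun hP => h (by simp [hP])
  have ht0 : Polynomial.taylor 1 P ≠ 0 := by
    intro hh
    have := congrArg (Polynomial.taylor (-1 : ℝ)) hh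
    rw [Polynomial.taylor_taylor, map_zero] at this
    norm_num at this
    exact h0 this
  have hlc : (Polynomial.taylor 1 P).leadingCoeff = P.leadingCoeff := by
    rw [Polynomial.taylor_apply]
    rw [Polynomial.leadingCoeff_comp
      (by rw [Polynomial.natDegree_X_add_C]; exact one_ne_zero)]
    rw [Polynomial.leadingCoeff_X_add_C, one_pow, mul_one]
  have hd : (Polynomial.taylor 1 P).degree = P.degree := by
    rw [Polynomial.degree_eq_natDegree ht0, Polynomial.degree_eq_natDegree h0,
      Polynomial.natDegree_taylor]
  have hsub := Polynomial.degree_sub_lt hd ht0 hlc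
  rw [hd] at hsub
  by_cases hz : Polynomial.taylor 1 P - P = 0
  · rw [hz]; simpa using Nat.pos_of_ne_zero h
  · exact Polynomial.natDegree_lt_natDegree hz hsub

lemma auxIterZeroFun : ∀ n : ℕ, (fwdDiff (1:ℝ))^[n] (fun _ => (0:ℝ)) = fun _ => 0 := by
  intro n
  induction n with
  | zero => rfl
  | succ n ih => rw [Function.iterate_succ_apply, fwdDiff_const, ih]

lemma auxIterZero : ∀ (n : ℕ) (P : ℝ[X]), P.natDegree < n →
    (fwdDiff (1:ℝ))^[n] (fun y => P.eval y) = fun _ => 0 := by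
  intro n
  induction n with
  | zero => intro P hP; omega
  | succ n ih =>
    intro P hP
    by_cases h0 : P.natDegree = 0
    · obtain ⟨a, rfl⟩ := Polynomial.natDegree_eq_zero.mp h0
      have he : (fun y : ℝ => (Polynomial.C a).eval y) = fun _ => a := by
        funext y; simp
      rw [Function.iterate_succ_apply, he, fwdDiff_const, auxIterZeroFun]
    · rw [Function.iterate_succ_apply, auxFwdEval]
      exact ih _ (lt_of_lt_of_le (auxDegDrop P h0) (by omega))

lemma auxVanish (P : ℝ[X]) (m : ℕ) (hP : P.natDegree ≤ m) (x : ℝ) :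
    ∑ i ∈ Finset.range (m+2), (-1:ℝ)^i * ((m+1).choose i) * P.eval (x - i) = 0 := by
  have h0 : (fwdDiff (1:ℝ))^[m+1] (fun y => P.eval y) (x - (m+1)) = 0 := by
    rw [auxIterZero (m+1) P (by omega)]
  rw [fwdDiff_iter_eq_sum_shift] at h0
  rw [← Finset.sum_range_reflect]
  rw [← h0]
  refine Finset.sum_congr rfl fun j hj => ?_
  rw [Finset.mem_range] at hj
  have hj' : j ≤ m + 1 := by omega
  rw [show m + 2 - 1 - j = m + 1 - j from by omega, Nat.choose_symm hj']
  have hc : ((m + 1 - j : ℕ) : ℝ) = (m+1 : ℝ) - j := by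
    push_cast [Nat.cast_sub hj']
    ring
  rw [zsmul_eq_mul]
  push_cast
  rw [hc]
  ring_nf

lemma auxOneSubXPowCoeff (N q : ℕ) :
    ((1 - Polynomial.X : ℝ[X]) ^ N).coeff q = (-1:ℝ)^q * (N.choose q) := by
  have h1 : (1 - Polynomial.X : ℝ[X]) = (-1) * (Polynomial.X + Polynomial.C (-1)) := by
    rw [map_neg, Polynomial.C_1]
    ring
  rw [h1, mul_pow, show ((-1 : ℝ[X]))^N = Polynomial.C ((-1:ℝ)^N) from by
      rw [map_pow, map_neg, Polynomial.C_1],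
    Polynomial.coeff_C_mul, Polynomial.coeff_X_add_C_pow]
  by_cases hq : q ≤ N
  · have hNq : N + (N - q) = 2 * (N - q) + q := by omega
    have : (-1:ℝ)^N * (-1:ℝ)^(N-q) = (-1:ℝ)^q := by
      rw [← pow_add, hNq, pow_add, pow_mul]
      norm_num
    rw [← mul_assoc, this]
  · rw [Nat.choose_eq_zero_of_lt (by omega)]
    push_cast
    ring

lemma auxCoeffU (H U : Polynomial ℝ) (m : ℕ)
    (hgen : (PowerSeries.mk fun k => H.eval (k : ℝ)) * (1 - PowerSeries.X) ^ (m + 1) =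
      (U : PowerSeries ℝ)) (j : ℕ) :
    U.coeff j = ∑ i ∈ Finset.range (j+1),
      (-1:ℝ)^i * ((m+1).choose i) * H.eval ((j:ℝ) - i) := by
  have h := congrArg (PowerSeries.coeff j) hgen
  rw [Polynomial.coeff_coe] at h
  rw [show ((1 : PowerSeries ℝ) - PowerSeries.X) = ((1 - Polynomial.X : ℝ[X]) : PowerSeries ℝ) from
    by rw [Polynomial.coe_sub, Polynomial.coe_one, Polynomial.coe_X],
    ← Polynomial.coe_pow, PowerSeries.coeff_mul] at h
  rw [Finset.Nat.sum_antidiagonal_eq_sum_range_succ_mk] at h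
  rw [← h, ← Finset.sum_range_reflect]
  refine Finset.sum_congr rfl fun i hi => ?_
  rw [Finset.mem_range] at hi
  have hi' : i ≤ j := by omega
  rw [show j + 1 - 1 - i = j - i from by omega]
  rw [PowerSeries.coeff_mk, Polynomial.coeff_coe, show j - (j - i) = i from by omega,
    auxOneSubXPowCoeff]
  have : ((j - i : ℕ) : ℝ) = (j:ℝ) - i := by push_cast [Nat.cast_sub hi']; ring
  rw [this]
  ring

lemma auxNegPow (n j : ℕ) (h : j ≤ n) : (-1:ℝ)^(n-j) = (-1)^n * (-1)^j := by
  have h1 : (-1:ℝ)^n = (-1)^(n-j) * (-1)^j := by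
    rw [← pow_add]
    congr 1
    omega
  rw [h1, mul_assoc, ← pow_add, ← two_mul, pow_mul]
  norm_num

theorem stmt7 (H U : Polynomial ℝ) (m : ℕ) (hm : H.natDegree = m) (k₀ : ℤ) (hk : 1 ≤ k₀)
    (hgen : (PowerSeries.mk fun k => H.eval (k : ℝ)) * (1 - PowerSeries.X) ^ (m + 1) =
      (U : PowerSeries ℝ))
    (hzero : ∀ j : ℤ, 1 ≤ j → j ≤ k₀ - 1 → H.eval (-(j : ℝ)) = 0)
    (hsym : ∀ k : ℤ, H.eval (k : ℝ) = (-1) ^ m * H.eval (-(k₀ : ℝ) - (k : ℝ))) :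
    ∀ t : ℝ, t ≠ 0 → t ≠ 1 →
      U.eval t⁻¹ / (1 - t⁻¹) ^ (m + 1) =
        (-1) ^ (m + 1) * t ^ k₀ * (U.eval t / (1 - t) ^ (m + 1)) := by
  set c : ℕ := k₀.toNat with hcdef
  have hck : (c : ℤ) = k₀ := Int.toNat_of_nonneg (by omega)
  have hc1 : 1 ≤ c := by omega
  have hcR : (c : ℝ) = (k₀ : ℝ) := by rw [← hck]; push_cast; ring
  have hcoeff := auxCoeffU H U m hgen
  -- vanishing of H at small negative naturals
  have hzn : ∀ i : ℕ, 1 ≤ i → i + 1 ≤ c → H.eval (-(i:ℝ)) = 0 := by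
    intro i h1 h2
    have := hzero (i : ℤ) (by omega) (by omega)
    simpa using this
  -- claim A : coefficients vanish high up
  have hA : ∀ j : ℕ, m + 2 ≤ j + c → U.coeff j = 0 := by
    intro j hj
    rw [hcoeff j]
    rcases le_or_gt (m + 1) j with hcase | hcase
    · -- j ≥ m+1 : full sum vanishes, extra terms have zero binomials
      rw [← Finset.sum_range_add_sum_Ico _ (show m + 2 ≤ j + 1 by omega)]
      rw [auxVanish H m (le_of_eq hm) (j : ℝ), zero_add]
      refine Finset.sum_eq_zero fun i hi => ?_
      rw [Finset.mem_Ico] at hi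
      rw [Nat.choose_eq_zero_of_lt (by omega)]
      push_cast
      ring
    · -- j ≤ m : tail terms vanish by hzero
      have hsplit := Finset.sum_range_add_sum_Ico
        (fun i => (-1:ℝ)^i * ((m+1).choose i) * H.eval ((j:ℝ) - i))
        (show j + 1 ≤ m + 2 by omega)
      rw [auxVanish H m (le_of_eq hm) (j : ℝ)] at hsplit
      have htail : ∀ i ∈ Finset.Ico (j+1) (m+2),
          (-1:ℝ)^i * ((m+1).choose i) * H.eval ((j:ℝ) - i) = 0 := by
        intro i hi
        rw [Finset.mem_Ico] at hi
        have hz : H.eval (-(((i - j : ℕ)):ℝ)) = 0 := hzn (i - j) (by omega) (by omega)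
        have harg : (j:ℝ) - i = -(((i - j : ℕ)):ℝ) := by
          push_cast [Nat.cast_sub (show j ≤ i by omega)]
          ring
        rw [harg, hz, mul_zero]
      rw [Finset.sum_eq_zero htail] at hsplit
      linarith [hsplit]
  -- claim B : coefficient symmetry
  have hB : ∀ a b : ℕ, a + b + c = m + 1 → U.coeff a = U.coeff b := by
    intro a b hab
    set g : ℕ → ℝ := fun i => (-1:ℝ)^i * ((m+1).choose i) * H.eval ((b:ℝ) - i) with hgdef
    have hg0 : ∑ i ∈ Finset.range (m+2), g i = 0 := auxVanish H m (le_of_eq hm) (b:ℝ)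
    have hUb : U.coeff b = ∑ i ∈ Finset.range (b+1), g i := hcoeff b
    have hmid : ∀ i ∈ Finset.Ico (b+1) (b+c), g i = 0 := by
      intro i hi
      rw [Finset.mem_Ico] at hi
      have hz : H.eval (-(((i - b : ℕ)):ℝ)) = 0 := hzn (i - b) (by omega) (by omega)
      have harg : (b:ℝ) - i = -(((i - b : ℕ)):ℝ) := by
        push_cast [Nat.cast_sub (show b ≤ i by omega)]
        ring
      rw [hgdef]
      simp only []
      rw [harg, hz, mul_zero]
    have hUa : U.coeff a = -∑ i ∈ Finset.Ico (b+c) (m+2), g i := by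
      rw [hcoeff a, Finset.sum_Ico_eq_sum_range,
        show m + 2 - (b + c) = a + 1 from by omega,
        ← Finset.sum_range_reflect (fun i => g (b + c + i)) (a+1), ← Finset.sum_neg_distrib]
      refine Finset.sum_congr rfl fun i hi => ?_
      rw [Finset.mem_range] at hi
      have hia : i ≤ a := by omega
      rw [show a + 1 - 1 - i = a - i from by omega, hgdef]
      simp only []
      rw [show b + c + (a - i) = m + 1 - i from by omega]
      rw [Nat.choose_symm (show i ≤ m + 1 by omega)]
      rw [auxNegPow (m+1) i (by omega)]
      have hcast : ((m + 1 - i : ℕ) : ℝ) = (m:ℝ) + 1 - i := by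
        push_cast [Nat.cast_sub (show i ≤ m + 1 by omega)]
        ring
      rw [hcast]
      have hsm := hsym ((a:ℤ) - (i:ℤ))
      push_cast at hsm
      rw [hsm]
      have hargeq : -(k₀:ℝ) - ((a:ℝ) - i) = (b:ℝ) - ((m:ℝ) + 1 - i) := by
        rw [← hcR]
        have : (a:ℝ) + b + c = (m:ℝ) + 1 := by exact_mod_cast congrArg (Nat.cast : ℕ → ℝ) hab
        linarith
      rw [hargeq, pow_succ]
      ring
    have e1 := Finset.sum_Ico_consecutive g
      (show 0 ≤ b+1 by omega) (show b+1 ≤ b+c by omega)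
    have e2 := Finset.sum_Ico_consecutive g
      (show 0 ≤ b+c by omega) (show b+c ≤ m+2 by omega)
    rw [Finset.sum_eq_zero hmid, add_zero] at e1
    rw [← e1] at e2
    rw [Finset.range_eq_Ico] at hg0 hUb
    rw [← hUb] at e2
    rw [hg0] at e2
    rw [hUa]
    linarith [e2]
  have hdeg : U.natDegree < m + 2 := by
    have : U.natDegree ≤ m := Polynomial.natDegree_le_iff_coeff_eq_zero.mpr
      (fun j hj => hA j (by omega))
    omega
  -- evaluation identity
  have hE : ∀ t : ℝ, t ≠ 0 → t^(m+1) * U.eval t⁻¹ = t^c * U.eval t := by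
    intro t ht
    rw [Polynomial.eval_eq_sum_range' hdeg, Polynomial.eval_eq_sum_range' hdeg,
      Finset.mul_sum, Finset.mul_sum]
    have hL1 : ∀ j ∈ Finset.range (m+2),
        t^(m+1) * (U.coeff j * (t⁻¹)^j) = U.coeff j * t^(m+1-j) := by
      intro j hj
      rw [Finset.mem_range] at hj
      have hpow : t^(m+1) = t^(m+1-j) * t^j := by
        rw [← pow_add]
        congr 1
        omega
      rw [hpow]
      rw [inv_pow, mul_assoc, mul_left_comm (t^j), mul_inv_cancel₀ (pow_ne_zero _ ht)]
      ring
    rw [Finset.sum_congr rfl hL1,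
      ← Finset.sum_range_reflect (fun j => U.coeff j * t^(m+1-j)) (m+2)]
    have hL2 : ∀ j ∈ Finset.range (m+2),
        U.coeff (m+2-1-j) * t^(m+1-(m+2-1-j)) = U.coeff (m+1-j) * t^j := by
      intro j hj
      rw [Finset.mem_range] at hj
      rw [show m+2-1-j = m+1-j from by omega, show m+1-(m+1-j) = j from by omega]
    rw [Finset.sum_congr rfl hL2]
    rcases le_or_gt (m+2) c with hcc | hcc
    · -- degenerate case : U = 0
      rw [Finset.sum_eq_zero, Finset.sum_eq_zero]
      · intro j hj
        rw [hA j (by omega)]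
        ring
      · intro j hj
        rw [hA (m+1-j) (by omega)]
        ring
    · -- main case : c ≤ m+1
      have hsplitL := Finset.sum_Ico_consecutive (fun j => U.coeff (m+1-j) * t^j)
        (show 0 ≤ c by omega) (show c ≤ m+2 by omega)
      have hsplitR := Finset.sum_Ico_consecutive (fun j => t^c * (U.coeff j * t^j))
        (show 0 ≤ m+2-c by omega) (show m+2-c ≤ m+2 by omega)
      rw [Finset.range_eq_Ico, ← hsplitL, ← hsplitR]
      have hz1 : ∑ j ∈ Finset.Ico 0 c, U.coeff (m+1-j) * t^j = 0 := by
        refine Finset.sum_eq_zero fun j hj => ?_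
        rw [Finset.mem_Ico] at hj
        rw [hA (m+1-j) (by omega)]
        ring
      have hz2 : ∑ j ∈ Finset.Ico (m+2-c) (m+2), t^c * (U.coeff j * t^j) = 0 := by
        refine Finset.sum_eq_zero fun j hj => ?_
        rw [Finset.mem_Ico] at hj
        rw [hA j (by omega)]
        ring
      rw [hz1, hz2, zero_add, add_zero]
      rw [Finset.sum_Ico_eq_sum_range]
      rw [show (Finset.Ico 0 (m+2-c)) = Finset.range (m+2-c) from by
        rw [Finset.range_eq_Ico]]
      refine Finset.sum_congr rfl fun k hk => ?_
      rw [Finset.mem_range] at hk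
      rw [hB (m+1-(c+k)) k (by omega), pow_add]
      ring
  intro t ht ht1
  have h1t : (1:ℝ) - t ≠ 0 := sub_ne_zero.mpr (Ne.symm ht1)
  have h1ti : (1:ℝ) - t⁻¹ ≠ 0 := by
    rw [sub_ne_zero]
    intro hh
    exact ht1 (by rw [← inv_inv t, ← hh, inv_one])
  have hkc : t ^ k₀ = t ^ c := by rw [← hck, zpow_natCast]
  rw [hkc]
  have hinv : (1:ℝ) - t⁻¹ = -(1-t) * t⁻¹ := by field_simp; ring
  have hEt := hE t ht
  have hup : U.eval t⁻¹ = t^c * U.eval t / t^(m+1) := by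
    rw [eq_div_iff (pow_ne_zero _ ht)]
    linear_combination hEt
  rw [hup, hinv, mul_pow, neg_pow]
  field_simp
  ring_nf
  rw [show ((-1:ℝ))^(m*2) = 1 from by rw [mul_comm, pow_mul]; norm_num]
  ring_nf
  field_simp
  rw [mul_assoc, ← mul_pow, mul_one_div_cancel ht, one_pow, mul_one]
end

section
/- Suppose n ≥ 2, N₀ ∈ ℝ, and H(z) = (2N₀/n!)(z + n/2)∏_{j=1}^{n-1}(z+j). If C, D ∈ ℝ satisfy: leading coefficient of H equals C/(nⁿ n!) and the coefficient of z^{n-2} equals (C+D)/(12 n^{n-2}(n-2)!), then C = 2N₀ nⁿ and D = N₀ n^{n-2}(n² - n + 2). -/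
open Polynomial

noncomputable def Qp (m : ℕ) : Polynomial ℝ := ∏ j ∈ Finset.Icc 1 m, (X + Polynomial.C (j : ℝ))

lemma Qp_succ (m : ℕ) : Qp (m + 1) = Qp m * (X + Polynomial.C ((m : ℝ) + 1)) := by
  rw [Qp, Finset.prod_Icc_succ_top (Nat.le_add_left 1 m)]
  push_cast
  rfl

lemma Qp_monic (m : ℕ) : (Qp m).Monic :=
  monic_prod_of_monic _ _ fun i _ => monic_X_add_C _

lemma Qp_natDegree (m : ℕ) : (Qp m).natDegree = m := by
  rw [Qp, natDegree_prod_of_monic _ _ fun _ _ => monic_X_add_C _]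
  simp only [natDegree_X_add_C, Finset.sum_const, smul_eq_mul, Nat.card_Icc]
  omega

lemma Qp_coeff_self (m : ℕ) : (Qp m).coeff m = 1 := by
  have := (Qp_monic m).coeff_natDegree
  rwa [Qp_natDegree] at this

lemma Qp_coeff_hi (m k : ℕ) (h : m < k) : (Qp m).coeff k = 0 :=
  coeff_eq_zero_of_natDegree_lt (by rw [Qp_natDegree]; exact h)

lemma mul_XC_coeff (p : Polynomial ℝ) (c : ℝ) (k : ℕ) :
    (p * (X + Polynomial.C c)).coeff (k + 1) = p.coeff k + c * p.coeff (k + 1) := by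
  rw [mul_add, coeff_add, coeff_mul_X, coeff_mul_C]; ring

lemma Qp_e1 (m : ℕ) : (Qp (m + 1)).coeff m = ((m : ℝ) + 1) * ((m : ℝ) + 2) / 2 := by
  induction m with
  | zero =>
      have : Qp 1 = X + Polynomial.C (1 : ℝ) := by
        rw [show (1 : ℕ) = 0 + 1 from rfl, Qp_succ]
        simp [Qp]
      rw [this]
      norm_num
  | succ k ih =>
      rw [Qp_succ (k + 1), mul_XC_coeff, ih, Qp_coeff_self]
      push_cast
      ring

lemma Qp_e2 (m : ℕ) : (Qp (m + 2)).coeff m =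
    ((m : ℝ) + 1) * ((m : ℝ) + 2) * ((m : ℝ) + 3) * (3 * (m : ℝ) + 8) / 24 := by
  induction m with
  | zero =>
      have h2 : Qp 2 = Qp 1 * (X + Polynomial.C (2 : ℝ)) := by
        have := Qp_succ 1; norm_num at this; exact this
      have h1 : Qp 1 = X + Polynomial.C (1 : ℝ) := by
        rw [show (1 : ℕ) = 0 + 1 from rfl, Qp_succ]
        simp [Qp]
      rw [h2, h1]
      simp [mul_coeff_zero]
      norm_num
  | succ k ih =>
      rw [Qp_succ (k + 2), mul_XC_coeff, ih, Qp_e1 (k + 1)]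
      push_cast
      ring

set_option maxHeartbeats 1000000 in
theorem stmt12 (n : ℕ) (hn : 2 ≤ n) (N₀ C D : ℝ) (H : Polynomial ℝ)
    (hHdef : H = Polynomial.C (2 * N₀ / n.factorial) * (X + Polynomial.C ((n : ℝ) / 2)) *
      ∏ j ∈ Finset.Icc 1 (n - 1), (X + Polynomial.C (j : ℝ)))
    (hC : H.coeff n = C / ((n : ℝ) ^ n * n.factorial))
    (hD : H.coeff (n - 2) = (C + D) / (12 * (n : ℝ) ^ (n - 2) * (n - 2).factorial)) :
    C = 2 * N₀ * (n : ℝ) ^ n ∧ D = N₀ * (n : ℝ) ^ (n - 2) * ((n : ℝ) ^ 2 - (n : ℝ) + 2) := by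
  obtain ⟨m, rfl⟩ : ∃ m, n = m + 2 := ⟨n - 2, by omega⟩
  have hIcc : m + 2 - 1 = m + 1 := rfl
  have hsub : m + 2 - 2 = m := rfl
  set a : ℝ := 2 * N₀ / (m + 2).factorial with ha
  have hH' : H = Polynomial.C a * (Qp (m + 1) * (X + Polynomial.C (((m : ℝ) + 2) / 2))) := by
    rw [hHdef, hIcc]
    push_cast
    rw [Qp]
    ring
  -- top coefficient
  have htop : H.coeff (m + 2) = a := by
    rw [hH', coeff_C_mul, mul_XC_coeff, Qp_coeff_self, Qp_coeff_hi (m + 1) (m + 2) (by omega)]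
    ring
  -- factorial facts
  have hfpos : (0 : ℝ) < (m + 2).factorial := by positivity
  have hnpos : (0 : ℝ) < ((m : ℝ) + 2) := by positivity
  have hCval : C = 2 * N₀ * ((m : ℝ) + 2) ^ (m + 2) := by
    rw [htop] at hC
    push_cast at hC
    have hne : ((m : ℝ) + 2) ^ (m + 2) * (m + 2).factorial ≠ 0 := by positivity
    rw [eq_comm, div_eq_iff hne] at hC
    rw [hC, ha]
    push_cast
    field_simp
  have hCgoal : C = 2 * N₀ * ((m + 2 : ℕ) : ℝ) ^ (m + 2) := by
    push_cast
    exact hCval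
  refine ⟨hCgoal, ?_⟩
  simp only [Nat.add_sub_cancel] at hD ⊢
  match m with
  | 0 =>
      have hQ1 : Qp 1 = X + Polynomial.C (1 : ℝ) := by
        rw [show (1 : ℕ) = 0 + 1 from rfl, Qp_succ]
        simp [Qp]
      have hc0 : H.coeff 0 = a := by
        rw [hH', coeff_C_mul, mul_coeff_zero, hQ1]
        norm_num
      rw [hc0, ha] at hD
      norm_num [Nat.factorial] at hD hCval ⊢
      linarith
  | k + 1 =>
      have hcm : H.coeff (k + 1) = a * (((k : ℝ) + 1) * ((k : ℝ) + 2) * ((k : ℝ) + 3) *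
          (3 * (k : ℝ) + 8) / 24 + (((k : ℝ) + 1 + 2) / 2) * (((k : ℝ) + 2) * ((k : ℝ) + 3) / 2)) := by
        rw [hH', coeff_C_mul]
        have : ((k + 1 : ℕ) : ℝ) + 2 = (k : ℝ) + 1 + 2 := by push_cast; ring
        rw [this, mul_XC_coeff, Qp_e2 k, Qp_e1 (k + 1)]
        push_cast
        ring
      rw [hcm] at hD
      have hne2 : (12 : ℝ) * ((k + 1 + 2 : ℕ) : ℝ) ^ (k + 1) * (k + 1).factorial ≠ 0 := by
        positivity
      rw [eq_comm, div_eq_iff hne2] at hD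
      have hfact : (((k + 1 + 2).factorial : ℝ)) = ((k : ℝ) + 3) * ((k : ℝ) + 2) * (k + 1).factorial := by
        rw [show k + 1 + 2 = (k + 2) + 1 from rfl, Nat.factorial_succ, Nat.factorial_succ]
        push_cast
        ring
      have hf1 : ((k + 1).factorial : ℝ) ≠ 0 := by positivity
      have hD' : D = C + D - C := by ring
      rw [hD', hD, hCval, ha, hfact]
      push_cast
      field_simp
      ring
end

section
/- Let n ≥ 2, N₀ ≠ 0 real, b ∈ ℝ, and let H be the real polynomial of degree n determined by the generating function identity Σ_{k≥0} H(k)t^k = N₀(1 + b t + t²)/(1-t)^{n+1}. If C, D are defined by: leading coefficient of H equals C/((n-1)ⁿ n!) and coefficient of z^{n-2} equals (C+D)/(12(n-1)^{n-2}(n-2)!), then C = N₀(b+2)(n-1)ⁿ and D = N₀(n-1)^{n-2}(12 + (b+2)n(n-3)/2). Consequently D - (n(n-3)/(2(n-1)²))·C = 12 N₀ (n-1)^{n-2}. -/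
open Polynomial Finset

lemma castDescFact (N : ℕ) : ∀ a : ℕ,
    ((a.descFactorial N : ℝ)) = ∏ i ∈ range N, ((a : ℝ) - i) := by
  induction N with
  | zero => simp
  | succ N ih =>
    intro a
    rw [Nat.descFactorial_succ, prod_range_succ, ← ih a]
    rcases le_or_gt N a with h | h
    · push_cast [h]; ring
    · rw [Nat.descFactorial_eq_zero_iff_lt.mpr h]
      rw [Nat.sub_eq_zero_of_le h.le]
      push_cast; ring

lemma castChoose (N a : ℕ) :
    ((a.choose N : ℝ)) = (∏ i ∈ range N, ((a : ℝ) - i)) / N.factorial := by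
  rw [← castDescFact, Nat.descFactorial_eq_factorial_mul_choose]
  have : (N.factorial : ℝ) ≠ 0 := Nat.cast_ne_zero.mpr (Nat.factorial_ne_zero _)
  push_cast
  field_simp

lemma prodCoeffs (c : ℝ) (m : ℕ) :
    (∏ i ∈ range (m+2), (X + C (c - i)) : ℝ[X]).natDegree ≤ m + 2 ∧
    (∏ i ∈ range (m+2), (X + C (c - i)) : ℝ[X]).coeff (m+2) = 1 ∧
    (∏ i ∈ range (m+2), (X + C (c - i)) : ℝ[X]).coeff (m+1)
      = ((m:ℝ)+2)*c - ((m:ℝ)+2)*((m:ℝ)+1)/2 ∧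
    (∏ i ∈ range (m+2), (X + C (c - i)) : ℝ[X]).coeff m
      = ((m:ℝ)+2)*((m:ℝ)+1)/2*c^2 - ((m:ℝ)+1)^2*((m:ℝ)+2)/2*c
        + (m:ℝ)*((m:ℝ)+1)*((m:ℝ)+2)*(3*(m:ℝ)+5)/24 := by
  induction m with
  | zero =>
    have h2 : (∏ i ∈ range 2, (X + C (c - i)) : ℝ[X])
        = X^2 + C c * X + C (c-1) * X + C c * C (c-1) := by
      rw [prod_range_succ, prod_range_one]
      norm_num
      ring
    refine ⟨?_, ?_, ?_, ?_⟩
    · refine le_trans (natDegree_prod_le _ _) ?_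
      have h1 : ∀ i ∈ range 2, (X + C (c - (i:ℝ))).natDegree = 1 :=
        fun i _ => natDegree_X_add_C _
      rw [Finset.sum_congr rfl h1]
      simp
    · rw [h2]; simp [coeff_X_pow, coeff_C, coeff_one, ← C_mul]
    · rw [h2]; simp [coeff_X_pow, coeff_C, coeff_one, ← C_mul]; try push_cast; try ring
    · rw [h2]; simp [coeff_X_pow, coeff_C, coeff_one, ← C_mul]; try push_cast; try ring
  | succ m ih =>
    obtain ⟨hdeg, h2, h1, h0⟩ := ih
    set p : ℝ[X] := ∏ i ∈ range (m+2), (X + C (c - i)) with hp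
    have hsplit : (∏ i ∈ range (m+2+1), (X + C (c - i)) : ℝ[X])
        = p * X + p * C (c - ((m+2 : ℕ) : ℝ)) := by
      rw [prod_range_succ, mul_add]
    have htop : p.coeff (m+3) = 0 :=
      coeff_eq_zero_of_natDegree_lt (lt_of_le_of_lt hdeg (by omega))
    refine ⟨?_, ?_, ?_, ?_⟩
    · rw [hsplit, ← mul_add]
      refine le_trans natDegree_mul_le ?_
      have h1' : (X + C (c - ((m+2 : ℕ) : ℝ))).natDegree = 1 := natDegree_X_add_C _
      omega
    · rw [show m+1+2 = m+3 from rfl, hsplit, coeff_add, coeff_mul_C,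
        show m+3 = (m+2)+1 from rfl, coeff_mul_X, h2, htop]
      ring
    · rw [show m+1+1 = m+2 from rfl, hsplit, coeff_add, coeff_mul_C,
        show m+2 = (m+1)+1 from rfl, coeff_mul_X, h1, h2]
      push_cast; ring
    · rw [hsplit, coeff_add, coeff_mul_C,
        show m+1 = m+1 from rfl, coeff_mul_X, h0, h1]
      push_cast; ring

theorem stmt13 (n : ℕ) (hn : 2 ≤ n) (N₀ b C D : ℝ) (hN₀ : N₀ ≠ 0) (H : Polynomial ℝ)
    (hH : ∀ k : ℕ, H.eval (k : ℝ) =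
      N₀ * (((n + k - 2).choose n : ℝ) + b * ((n + k - 1).choose n : ℝ) + ((n + k).choose n : ℝ)))
    (hC : H.coeff n = C / (((n : ℝ) - 1) ^ n * n.factorial))
    (hD : H.coeff (n - 2) = (C + D) / (12 * ((n : ℝ) - 1) ^ (n - 2) * (n - 2).factorial)) :
    C = N₀ * (b + 2) * ((n : ℝ) - 1) ^ n ∧
      D = N₀ * ((n : ℝ) - 1) ^ (n - 2) * (12 + (b + 2) * n * ((n : ℝ) - 3) / 2) ∧
      D - ((n : ℝ) * ((n : ℝ) - 3) / (2 * ((n : ℝ) - 1) ^ 2)) * C =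
        12 * N₀ * ((n : ℝ) - 1) ^ (n - 2) := by
  obtain ⟨m, rfl⟩ : ∃ m, n = m + 2 := ⟨n - 2, by omega⟩
  clear hn
  set x : ℝ := (m : ℝ) with hx
  set g : ℝ → ℝ[X] := fun c => ∏ i ∈ range (m+2), (X + Polynomial.C (c - i)) with hg
  set Q : ℝ[X] := Polynomial.C (N₀ / (m+2).factorial) *
    (g x + Polynomial.C b * g (x+1) + g (x+2)) with hQ
  have hfact : ((m+2).factorial : ℝ) ≠ 0 := Nat.cast_ne_zero.mpr (Nat.factorial_ne_zero _)
  have hmfact : ((m).factorial : ℝ) ≠ 0 := Nat.cast_ne_zero.mpr (Nat.factorial_ne_zero _)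
  have hx1 : x + 1 ≠ 0 := by positivity
  have hx2 : x + 2 ≠ 0 := by positivity
  have hgeval : ∀ (c : ℝ) (y : ℝ), (g c).eval y = ∏ i ∈ range (m+2), (y + c - i) := by
    intro c y
    rw [hg]
    simp only [eval_prod, eval_add, eval_X, eval_C]
    exact Finset.prod_congr rfl (fun i _ => by ring)
  -- H = Q
  have hHQ : H = Q := by
    have hroots : ∀ k : ℕ, (H - Q).IsRoot (k : ℝ) := by
      intro k
      have key : ∀ j : ℕ, ((m + k + j).choose (m+2) : ℝ)
          = (g (x + j)).eval (k : ℝ) / (m+2).factorial := by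
        intro j
        rw [castChoose, hgeval]
        congr 1
        exact Finset.prod_congr rfl (fun i _ => by rw [hx]; push_cast; ring)
      have hHk := hH k
      rw [show m + 2 + k - 2 = m + k + 0 from by omega,
        show m + 2 + k - 1 = m + k + 1 from by omega,
        show m + 2 + k = m + k + 2 from by omega,
        key 0, key 1, key 2] at hHk
      simp only [IsRoot, eval_sub, hQ, eval_mul, eval_add, eval_C]
      rw [hHk]
      push_cast
      field_simp
      try ring
    have hsub : H - Q = 0 := by
      apply Polynomial.eq_zero_of_infinite_isRoot
      apply Set.infinite_of_injective_forall_mem (f := fun k : ℕ => (k : ℝ))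
        Nat.cast_injective
      exact hroots
    exact sub_eq_zero.mp hsub
  -- coefficients of Q
  have hQ2 : Q.coeff (m+2) = N₀ / (m+2).factorial * (b + 2) := by
    rw [hQ, coeff_C_mul, coeff_add, coeff_add, coeff_C_mul, hg]
    rw [(prodCoeffs x m).2.1, (prodCoeffs (x+1) m).2.1, (prodCoeffs (x+2) m).2.1]
    ring
  have hQ0 : Q.coeff m = N₀ / (m+2).factorial *
      ((b+2) * (x*(x+1)*(x+2)*(3*x+5)/24) + (x+1)*(x+2)) := by
    rw [hQ, coeff_C_mul, coeff_add, coeff_add, coeff_C_mul, hg]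
    rw [(prodCoeffs x m).2.2.2, (prodCoeffs (x+1) m).2.2.2, (prodCoeffs (x+2) m).2.2.2]
    rw [hx]
    ring
  -- translate hC
  rw [hHQ, hQ2] at hC
  rw [hHQ, Nat.add_sub_cancel, hQ0] at hD
  have hcast : ((m + 2 : ℕ) : ℝ) - 1 = x + 1 := by rw [hx]; push_cast; ring
  rw [hcast] at hC hD
  have hfe : ((m+2).factorial : ℝ) = (x+2) * (x+1) * (m.factorial : ℝ) := by
    rw [show m + 2 = (m+1)+1 from rfl, Nat.factorial_succ, Nat.factorial_succ, hx]
    push_cast; ring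
  have hCval : C = N₀ * (b + 2) * (x+1)^(m+2) := by
    rw [eq_comm, div_eq_iff (by positivity)] at hC
    rw [hC, hfe]
    field_simp
    try ring
  have hCD : C + D = (N₀ / ((m+2).factorial : ℝ) *
      ((b+2) * (x*(x+1)*(x+2)*(3*x+5)/24) + (x+1)*(x+2)))
      * (12 * (x+1)^m * (m.factorial : ℝ)) := by
    rw [eq_comm, div_eq_iff (by positivity)] at hD
    linarith [hD]
  have hDval : D = N₀ * (x+1)^m * (12 + (b+2) * (x+2) * (x-1) / 2) := by
    have h3 : D = (N₀ / ((m+2).factorial : ℝ) *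
        ((b+2) * (x*(x+1)*(x+2)*(3*x+5)/24) + (x+1)*(x+2)))
        * (12 * (x+1)^m * (m.factorial : ℝ)) - N₀ * (b + 2) * (x+1)^(m+2) := by
      linarith [hCD, hCval]
    rw [h3, hfe]
    field_simp
    ring
  refine ⟨?_, ?_, ?_⟩
  · rw [hCval, hcast]
  · rw [hDval, Nat.add_sub_cancel, hcast]
    rw [hx]; push_cast; ring
  · rw [hDval, hCval, Nat.add_sub_cancel, hcast]
    rw [hx]
    field_simp
    push_cast
    ring
end

section
/- Let n ≥ 3, N₀ ≠ 0 real, b ∈ ℝ, and let H be the polynomial of degree n with Σ_{k≥0} H(k)t^k = N₀(1 + b t + b t² + t³)/(1-t)^{n+1}. Define C by: leading coefficient of H = C/((n-2)ⁿ n!) and D by: coefficient of z^{n-2} of H = (C+D)/(12(n-2)^{n-2}(n-2)!). Then C = 2N₀(b+1)(n-2)ⁿ, D = N₀(n-2)^{n-2}(24 + (b+1)(n-2)(n-3)), and hence D - ((n-3)/(2(n-2)))·C = 24 N₀ (n-2)^{n-2}. -/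
open Polynomial

namespace Stmt14Aux

open Finset

lemma asc_prod (x : ℕ) : ∀ t : ℕ, x.ascFactorial t = ∏ i ∈ Finset.range t, (x + i)
  | 0 => by simp
  | t + 1 => by
    rw [Nat.ascFactorial_succ, Finset.prod_range_succ, asc_prod x t, mul_comm]

lemma key (n k j : ℕ) (hj : j ≤ 3) (hn : 3 ≤ n) :
    (((n + k - j).choose n : ℝ)) * n.factorial
      = ∏ i ∈ Finset.range n, ((k : ℝ) + (1 - (j : ℝ)) + i) := by
  rcases le_or_gt j k with h | h
  · obtain ⟨m, rfl⟩ : ∃ m, k = j + m := ⟨k - j, by omega⟩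
    have h1 : n + (j + m) - j = n + m := by omega
    rw [h1]
    have h3 : ∀ i ∈ Finset.range n,
        ((j + m : ℕ) : ℝ) + (1 - (j : ℝ)) + i = ((m + 1 + i : ℕ) : ℝ) := by
      intro i _; push_cast; ring
    rw [Finset.prod_congr rfl h3, ← Nat.cast_prod, ← asc_prod,
      Nat.ascFactorial_eq_factorial_mul_choose]
    push_cast
    ring
  · have hlt : n + k - j < n := by omega
    rw [Nat.choose_eq_zero_of_lt hlt]
    have hmem : j - 1 - k ∈ Finset.range n := by
      simp only [Finset.mem_range]; omega
    have hz : (k : ℝ) + (1 - (j : ℝ)) + ((j - 1 - k : ℕ) : ℝ) = 0 := by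
      have h4 : (j - 1 - k) + k + 1 = j := by omega
      have h5 : (((j - 1 - k) + k + 1 : ℕ) : ℝ) = (j : ℝ) := by rw [h4]
      push_cast at h5
      linarith
    rw [Finset.prod_eq_zero hmem hz]
    simp

noncomputable def fpoly (c : ℝ) (n : ℕ) : Polynomial ℝ :=
  ∏ i ∈ Finset.range n, (X + C (c + i))

lemma fpoly_succ (c : ℝ) (m : ℕ) :
    fpoly c (m + 1) = fpoly c m * (X + C (c + m)) := Finset.prod_range_succ _ _

lemma fpoly_monic (c : ℝ) (n : ℕ) : (fpoly c n).Monic :=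
  monic_prod_of_monic _ _ fun _ _ => monic_X_add_C _

lemma fpoly_natDegree (c : ℝ) (n : ℕ) : (fpoly c n).natDegree = n := by
  rw [fpoly, natDegree_prod]
  · simp only [natDegree_X_add_C, Finset.sum_const, smul_eq_mul, mul_one, Finset.card_range]
  · intro i _; exact (monic_X_add_C _).ne_zero

lemma fpoly_eval (c : ℝ) (n : ℕ) (x : ℝ) :
    (fpoly c n).eval x = ∏ i ∈ Finset.range n, (x + c + i) := by
  simp [fpoly, eval_prod, add_assoc]

lemma c_top (c : ℝ) (n : ℕ) : (fpoly c n).coeff n = 1 := by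
  have := (fpoly_monic c n).coeff_natDegree
  rwa [fpoly_natDegree] at this

lemma coeff_mul_XC (p : Polynomial ℝ) (a : ℝ) (k : ℕ) :
    (p * (X + C a)).coeff (k + 1) = p.coeff k + a * p.coeff (k + 1) := by
  rw [mul_add, coeff_add, coeff_mul_X, coeff_mul_C]; ring

lemma c1 (c : ℝ) : ∀ m : ℕ,
    (fpoly c (m + 1)).coeff m = ((m : ℝ) + 1) * c + (m : ℝ) * ((m : ℝ) + 1) / 2
  | 0 => by
    simp [fpoly, Finset.prod_range_one]
  | m + 1 => by
    rw [fpoly_succ, coeff_mul_XC, c1 c m, c_top]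
    push_cast
    ring

noncomputable def E2 (c x : ℝ) : ℝ :=
  ((x * c + x * (x - 1) / 2) ^ 2
    - (x * c ^ 2 + x * (x - 1) * c + (x - 1) * x * (2 * x - 1) / 6)) / 2

lemma c2 (c : ℝ) : ∀ m : ℕ, (fpoly c (m + 2)).coeff m = E2 c ((m : ℝ) + 2)
  | 0 => by
    have h : fpoly c 2 = (X + C (c + 0)) * (X + C (c + 1)) := by
      rw [fpoly, Finset.prod_range_succ, Finset.prod_range_one]
      norm_num
    rw [h]
    simp [coeff_zero_eq_eval_zero, E2]
    ring
  | m + 1 => by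
    rw [fpoly_succ, coeff_mul_XC, c2 c m, c1 c (m + 1), E2, E2]
    push_cast
    ring

end Stmt14Aux

open Stmt14Aux

theorem stmt14 (n : ℕ) (hn : 3 ≤ n) (N₀ b C D : ℝ) (hN₀ : N₀ ≠ 0) (H : Polynomial ℝ)
    (hH : ∀ k : ℕ, H.eval (k : ℝ) =
      N₀ * (((n + k - 3).choose n : ℝ) + b * ((n + k - 2).choose n : ℝ) +
        b * ((n + k - 1).choose n : ℝ) + ((n + k).choose n : ℝ)))
    (hC : H.coeff n = C / (((n : ℝ) - 2) ^ n * n.factorial))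
    (hD : H.coeff (n - 2) = (C + D) / (12 * ((n : ℝ) - 2) ^ (n - 2) * (n - 2).factorial)) :
    C = 2 * N₀ * (b + 1) * ((n : ℝ) - 2) ^ n ∧
      D = N₀ * ((n : ℝ) - 2) ^ (n - 2) * (24 + (b + 1) * ((n : ℝ) - 2) * ((n : ℝ) - 3)) ∧
      D - (((n : ℝ) - 3) / (2 * ((n : ℝ) - 2))) * C = 24 * N₀ * ((n : ℝ) - 2) ^ (n - 2) := by
  have hfac : ((n.factorial : ℝ)) ≠ 0 := by positivity
  -- the explicit polynomial
  set Q : Polynomial ℝ := Polynomial.C (N₀ / n.factorial) *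
      (fpoly (-2) n + Polynomial.C b * fpoly (-1) n
        + Polynomial.C b * fpoly 0 n + fpoly 1 n) with hQdef
  have hQeval : ∀ k : ℕ, Q.eval (k : ℝ) = H.eval (k : ℝ) := by
    intro k
    have k3 : (∏ i ∈ Finset.range n, ((k : ℝ) + -2 + (i : ℝ)))
        = ((n + k - 3).choose n : ℝ) * n.factorial := by
      rw [key n k 3 (by norm_num) hn]
      exact Finset.prod_congr rfl fun i _ => by norm_num
    have k2 : (∏ i ∈ Finset.range n, ((k : ℝ) + -1 + (i : ℝ)))
        = ((n + k - 2).choose n : ℝ) * n.factorial := by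
      rw [key n k 2 (by norm_num) hn]
      exact Finset.prod_congr rfl fun i _ => by norm_num
    have k1 : (∏ i ∈ Finset.range n, ((k : ℝ) + 0 + (i : ℝ)))
        = ((n + k - 1).choose n : ℝ) * n.factorial := by
      rw [key n k 1 (by norm_num) hn]
      exact Finset.prod_congr rfl fun i _ => by norm_num
    have k0 : (∏ i ∈ Finset.range n, ((k : ℝ) + 1 + (i : ℝ)))
        = ((n + k).choose n : ℝ) * n.factorial := by
      have := key n k 0 (by norm_num) hn
      rw [Nat.sub_zero] at this
      rw [this]
      exact Finset.prod_congr rfl fun i _ => by norm_num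
    rw [hH, hQdef]
    simp only [eval_mul, eval_add, eval_C, fpoly_eval]
    rw [k3, k2, k1, k0]
    field_simp
  have hHQ : H = Q := by
    have hsub : H - Q = 0 := by
      apply Polynomial.eq_zero_of_infinite_isRoot
      apply Set.Infinite.mono (s := Set.range ((↑) : ℕ → ℝ))
      · rintro x ⟨k, rfl⟩
        simp [Polynomial.IsRoot, hQeval k]
      · exact Set.infinite_range_of_injective Nat.cast_injective
    exact sub_eq_zero.mp hsub
  -- top coefficient
  have htop : H.coeff n = N₀ / n.factorial * (2 + 2 * b) := by
    rw [hHQ, hQdef]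
    simp only [coeff_C_mul, coeff_add, c_top]
    ring
  obtain ⟨m, rfl⟩ : ∃ m, n = m + 3 := ⟨n - 3, by omega⟩
  have hn2 : m + 3 - 2 = m + 1 := by omega
  have hcast : (((m + 3 : ℕ)) : ℝ) = (m : ℝ) + 3 := by push_cast; ring
  have hfaceq : (((m + 3).factorial : ℝ))
      = ((m : ℝ) + 3) * ((m : ℝ) + 2) * ((m + 1).factorial : ℝ) := by
    rw [show m + 3 = (m + 2) + 1 from rfl, Nat.factorial_succ,
      show m + 2 = (m + 1) + 1 from rfl, Nat.factorial_succ]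
    push_cast
    ring
  have hfac1 : (((m + 1).factorial : ℝ)) ≠ 0 := by positivity
  have hm1 : ((m : ℝ) + 1) ≠ 0 := by positivity
  have hm2 : ((m : ℝ) + 2) ≠ 0 := by positivity
  have hm3 : ((m : ℝ) + 3) ≠ 0 := by positivity
  -- middle coefficient
  have hmid : H.coeff (m + 3 - 2) = N₀ / (m + 3).factorial *
      (E2 (-2) ((m : ℝ) + 3) + b * E2 (-1) ((m : ℝ) + 3)
        + b * E2 0 ((m : ℝ) + 3) + E2 1 ((m : ℝ) + 3)) := by
    rw [hn2, hHQ, hQdef]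
    have h2 : ∀ c : ℝ, (fpoly c (m + 3)).coeff (m + 1) = E2 c ((m : ℝ) + 3) := by
      intro c
      have h : (fpoly c (m + 3)).coeff (m + 1) = E2 c (((m + 1 : ℕ) : ℝ) + 2) := c2 c (m + 1)
      rw [h]
      congr 1
      push_cast
      ring
    simp only [coeff_C_mul, coeff_add, h2]
  -- solve for C
  have hd1 : ((((m + 3 : ℕ) : ℝ)) - 2) ^ (m + 3) * ((m + 3).factorial : ℝ) ≠ 0 := by
    rw [hcast]
    have h : ((m : ℝ) + 3 - 2) = (m : ℝ) + 1 := by ring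
    rw [h]
    positivity
  have hCval : C = 2 * N₀ * (b + 1) * (((m + 3 : ℕ) : ℝ) - 2) ^ (m + 3) := by
    rw [eq_div_iff hd1, htop] at hC
    rw [← hC, hfaceq]
    field_simp
    ring
  -- solve for D
  have hdenom : (12 * (((m + 3 : ℕ) : ℝ) - 2) ^ (m + 3 - 2) * ((m + 3 - 2).factorial : ℝ)) ≠ 0 := by
    rw [hn2, hcast]
    have h : ((m : ℝ) + 3 - 2) = (m : ℝ) + 1 := by ring
    rw [h]
    positivity
  have hpm : ((m : ℝ) + 3 - 2) = (m : ℝ) + 1 := by ring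
  have h3 : (C + D) * (((m : ℝ) + 3) * ((m : ℝ) + 2))
      = N₀ * (E2 (-2) ((m : ℝ) + 3) + b * E2 (-1) ((m : ℝ) + 3)
          + b * E2 0 ((m : ℝ) + 3) + E2 1 ((m : ℝ) + 3))
        * 12 * ((m : ℝ) + 1) ^ (m + 1) := by
    have h1 : H.coeff (m + 3 - 2) * (12 * (((m + 3 : ℕ) : ℝ) - 2) ^ (m + 3 - 2)
        * ((m + 3 - 2).factorial : ℝ)) = C + D := by
      rw [hD]; exact div_mul_cancel₀ _ hdenom
    rw [hmid, hn2, hcast, hfaceq, hpm] at h1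
    rw [← h1]
    field_simp
  have hCpow : C = 2 * N₀ * (b + 1) * (((m : ℝ) + 1) ^ (m + 1) * ((m : ℝ) + 1) ^ 2) := by
    rw [hCval, hcast, hpm, show m + 3 = m + 1 + 2 from rfl, pow_add]
  have hDval : D = N₀ * ((m : ℝ) + 1) ^ (m + 1) * (24 + (b + 1) * ((m : ℝ) + 1) * (m : ℝ)) := by
    have hgoal : D * (((m : ℝ) + 3) * ((m : ℝ) + 2))
        = (N₀ * ((m : ℝ) + 1) ^ (m + 1) * (24 + (b + 1) * ((m : ℝ) + 1) * (m : ℝ)))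
          * (((m : ℝ) + 3) * ((m : ℝ) + 2)) := by
      simp only [E2] at h3
      linear_combination h3 - (((m : ℝ) + 3) * ((m : ℝ) + 2)) * hCpow
    exact mul_right_cancel₀ (mul_ne_zero hm3 hm2) hgoal
  refine ⟨hCval, ?_, ?_⟩
  · rw [hn2, hcast, hpm, hDval]
    ring
  · rw [hCpow, hDval, hn2, hcast, hpm]
    field_simp
    ring
end
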